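/- For every rational number r with 0 < r < 1 there exists exactly one pair of rational numbers (p, q) with 0 ≤ p < q ≤ 1 such that p and q are compatible and the Farey sum of p and q equals r; that is, |p.num * q.den − q.num * p.den| = 1 and r = (p.num + q.num)/(p.den + q.den). (In the Farey tree, every vertex r ∈ ℚ ∩ (0,1) has a unique pair of parents.) -/

import Mathlib

/-- Rationals `p, q` (in reduced form) are compatible if `|p.num * q.den - q.num * p.den| = 1`. -/
def FareyCompatible (p q : ℚ) : Prop :=
  |p.num * (q.den : ℤ) - q.num * (p.den : ℤ)| = 1

/-- The Farey sum (mediant) of two rationals, as a rational number. -/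
def fareySum (p q : ℚ) : ℚ :=
  ((p.num : ℚ) + (q.num : ℚ)) / ((p.den : ℚ) + (q.den : ℚ))

private lemma rat_num_den_of_coprime {c d : ℤ} (hd : 0 < d) (h : IsCoprime c d) :
    ((c : ℚ) / (d : ℚ)).num = c ∧ (((c : ℚ) / (d : ℚ)).den : ℤ) = d := by
  have h' : Nat.Coprime c.natAbs d.natAbs := Int.isCoprime_iff_gcd_eq_one.mp h
  exact ⟨Rat.num_div_eq_of_coprime hd h', Rat.den_div_eq_of_coprime hd h'⟩

/-- Every rational `r` with `0 < r < 1` is the Farey sum of a unique compatible pair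
`(p, q)` with `0 ≤ p < q ≤ 1`: in the Farey tree, every vertex has a unique pair of
parents. -/
theorem farey_parents_exists_unique (r : ℚ) (h0 : 0 < r) (h1 : r < 1) :
    ∃! pq : ℚ × ℚ, 0 ≤ pq.1 ∧ pq.1 < pq.2 ∧ pq.2 ≤ 1 ∧
      FareyCompatible pq.1 pq.2 ∧ r = fareySum pq.1 pq.2 := by
  set a : ℤ := r.num with ha_def
  set b : ℤ := (r.den : ℤ) with hb_def
  have ha : 0 < a := Rat.num_pos.mpr h0
  have hbpos : 0 < b := Int.natCast_pos.mpr r.pos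
  have hab : a < b := by exact_mod_cast Rat.num_lt_denom_iff.mpr h1
  have hb2 : 2 ≤ b := by omega
  have hcop : IsCoprime a b := by
    rw [Int.isCoprime_iff_gcd_eq_one]
    exact r.reduced
  obtain ⟨u, v, huv⟩ := hcop
  set d : ℤ := u % b with hd_def
  have hd0 : 0 ≤ d := Int.emod_nonneg u hbpos.ne'
  have hdb : d < b := Int.emod_lt_of_pos u hbpos
  have hud : b ∣ u - d := by
    rw [hd_def, Int.emod_def]; exact ⟨u / b, by ring⟩
  obtain ⟨k, hk⟩ := hud
  have hdvd : b ∣ a * d - 1 := ⟨-v - a * k, by linear_combination huv - a * hk⟩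
  have hd1 : 1 ≤ d := by
    rcases lt_or_ge 0 d with h | h
    · omega
    · exfalso
      have hd0' : d = 0 := le_antisymm h hd0
      rw [hd0'] at hdvd
      have : b ∣ 1 := (dvd_neg).mp (by simpa using hdvd)
      have := Int.le_of_dvd one_pos this
      omega
  obtain ⟨c, hc⟩ := hdvd
  -- hc : a * d - 1 = b * c
  have hc0 : 0 ≤ c := by nlinarith
  have hf : 0 < b - d := by omega
  have key2 : (a - c) * b - a * (b - d) = 1 := by linear_combination hc
  have hef : a - c ≤ b - d := by nlinarith
  have hcop_cd : IsCoprime c d := ⟨-b, a, by linear_combination hc⟩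
  have hcop_ef : IsCoprime (a - c) (b - d) := ⟨d, -c, by linear_combination hc⟩
  have hd1pos : 0 < d := hd1
  obtain ⟨hPn, hPd⟩ := rat_num_den_of_coprime hd1pos hcop_cd
  obtain ⟨hQn, hQd⟩ := rat_num_den_of_coprime hf hcop_ef
  set P : ℚ := (c : ℚ) / (d : ℚ) with hP_def
  set Q : ℚ := ((a - c : ℤ) : ℚ) / ((b - d : ℤ) : ℚ) with hQ_def
  have hPdQ : (P.den : ℚ) = (d : ℚ) := by exact_mod_cast hPd
  have hQdQ : (Q.den : ℚ) = ((b - d : ℤ) : ℚ) := by exact_mod_cast hQd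
  refine ⟨(P, Q), ⟨?_, ?_, ?_, ?_, ?_⟩, ?_⟩
  · -- 0 ≤ P
    exact div_nonneg (by exact_mod_cast hc0) (by positivity)
  · -- P < Q
    rw [hP_def, hQ_def, div_lt_div_iff₀ (by exact_mod_cast hd1pos) (by exact_mod_cast hf)]
    have : c * (b - d) < (a - c) * d := by nlinarith
    exact_mod_cast this
  · -- Q ≤ 1
    rw [hQ_def, div_le_one (by exact_mod_cast hf)]
    exact_mod_cast hef
  · -- compatible
    show |P.num * (Q.den : ℤ) - Q.num * (P.den : ℤ)| = 1
    rw [hPn, hQn, hPd, hQd]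
    rw [show c * (b - d) - (a - c) * d = -1 by linear_combination -hc]
    norm_num
  · -- r = fareySum P Q
    rw [fareySum, hPn, hQn, hPdQ, hQdQ]
    rw [show ((c : ℚ) + ((a - c : ℤ) : ℚ)) = (a : ℚ) by push_cast; ring,
        show (((d : ℤ) : ℚ) + ((b - d : ℤ) : ℚ)) = (b : ℚ) by push_cast; ring]
    exact (Rat.num_div_den r).symm
  · -- uniqueness
    rintro ⟨p, q⟩ ⟨hp0, hpq, hq1, hcpt, hr⟩
    have hpd : 0 < (p.den : ℤ) := Int.natCast_pos.mpr p.pos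
    have hqd : 0 < (q.den : ℤ) := Int.natCast_pos.mpr q.pos
    have hlt : p.num * (q.den : ℤ) < q.num * (p.den : ℤ) := (Rat.lt_iff p q).mp hpq
    have key : p.num * (q.den : ℤ) - q.num * (p.den : ℤ) = -1 := by
      have hcpt' : |p.num * (q.den : ℤ) - q.num * (p.den : ℤ)| = 1 := hcpt
      rcases (abs_eq (by norm_num : (0:ℤ) ≤ 1)).mp hcpt' with h | h
      · linarith
      · exact h
    have hcop_sum : IsCoprime (p.num + q.num) ((p.den : ℤ) + (q.den : ℤ)) :=
      ⟨-(q.den : ℤ), q.num, by linear_combination -key⟩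
    have hsum_pos : 0 < (p.den : ℤ) + (q.den : ℤ) := by positivity
    have hr' : r = ((p.num + q.num : ℤ) : ℚ) / (((p.den : ℤ) + (q.den : ℤ) : ℤ) : ℚ) := by
      rw [hr, fareySum]; push_cast; ring_nf
    obtain ⟨hnum, hden⟩ := rat_num_den_of_coprime hsum_pos hcop_sum
    have hA : a = p.num + q.num := by rw [ha_def, hr']; exact hnum
    have hB : b = (p.den : ℤ) + (q.den : ℤ) := by rw [hb_def, hr']; exact hden
    have key3 : a * (p.den : ℤ) - 1 = b * p.num := by
      rw [hA, hB]; linear_combination -key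
    have hdvd2 : b ∣ a * ((p.den : ℤ) - d) := ⟨p.num - c, by linear_combination key3 - hc⟩
    have hcop' : IsCoprime b a := ⟨v, u, by linear_combination huv⟩
    have hdvd3 : b ∣ (p.den : ℤ) - d := hcop'.dvd_of_dvd_mul_left hdvd2
    have hpd_lt : (p.den : ℤ) < b := by omega
    have hpdd : (p.den : ℤ) = d := by
      have habs : |(p.den : ℤ) - d| < b := by
        rw [abs_lt]; omega
      have := Int.eq_zero_of_abs_lt_dvd hdvd3 habs
      omega
    have hpn : p.num = c := by
      have : b * p.num = b * c := by rw [← key3, hpdd, hc]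
      exact mul_left_cancel₀ hbpos.ne' this
    have hqn : q.num = a - c := by omega
    have hqdd : (q.den : ℤ) = b - d := by omega
    have hpP : p = P := by
      rw [hP_def, ← hpn, ← hpdd]
      exact (Rat.num_div_den p).symm
    have hqQ : q = Q := by
      rw [hQ_def, ← hqn, ← hqdd]
      exact (Rat.num_div_den q).symm
    exact Prod.ext hpP hqQ
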